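/- Let p(·) be a measurable exponent with 0 < p₋ ≤ p₊ < ∞, b a slowly varying function, θ with p₊ < θ < ∞, and (A_i)_{i∈ℕ} pairwise disjoint measurable sets in a probability space. Then ∑_i ‖χ_{A_i}‖_{p(·)}^θ γ_b^θ(‖χ_{A_i}‖_{p(·)}) ≲ ‖∑_i χ_{A_i}‖_{p(·)}^θ γ_b^θ(‖∑_i χ_{A_i}‖_{p(·)}). -/

import Mathlib

open MeasureTheory Set ENNReal Filter Topology

noncomputable section

/-- A measurable function `b : [1,∞) → (0,∞)` is slowly varying if for every `ε > 0`,
`t ^ ε * b t` is equivalent (up to multiplicative constants) to a nondecreasing function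
and `t ^ (-ε) * b t` is equivalent to a nonincreasing function on `[1,∞)`. -/
def SlowlyVarying (b : ℝ → ℝ) : Prop :=
  (∀ t : ℝ, 1 ≤ t → 0 < b t) ∧
  ∀ ε : ℝ, 0 < ε →
    ((∃ g : ℝ → ℝ, MonotoneOn g (Set.Ici 1) ∧ ∃ c > (0:ℝ), ∃ C > (0:ℝ),
        ∀ t : ℝ, 1 ≤ t → c * g t ≤ t ^ ε * b t ∧ t ^ ε * b t ≤ C * g t) ∧
     (∃ g : ℝ → ℝ, AntitoneOn g (Set.Ici 1) ∧ ∃ c > (0:ℝ), ∃ C > (0:ℝ),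
        ∀ t : ℝ, 1 ≤ t → c * g t ≤ t ^ (-ε) * b t ∧ t ^ (-ε) * b t ≤ C * g t))

/-- `γ_b(t) = b (max {t, t⁻¹})` for `t > 0`. -/
def gammaB (b : ℝ → ℝ) (t : ℝ) : ℝ := b (max t t⁻¹)

variable {Ω : Type*} [MeasurableSpace Ω]

/-- The variable Lebesgue quasi-norm
`‖f‖_{p(·)} = inf {λ > 0 : ∫ (|f|/λ)^{p(·)} dμ ≤ 1}`. -/
def vLpNorm (μ : Measure Ω) (p : Ω → ℝ) (f : Ω → ℝ) : ℝ :=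
  sInf {lam : ℝ | 0 < lam ∧ ∫⁻ ω, ENNReal.ofReal ((|f ω| / lam) ^ p ω) ∂μ ≤ 1}

/-- `f ∈ L_{p(·)}` : the modular is finite for some `λ > 0`. -/
def MemVLp (μ : Measure Ω) (p : Ω → ℝ) (f : Ω → ℝ) : Prop :=
  ∃ lam > (0:ℝ), ∫⁻ ω, ENNReal.ofReal ((|f ω| / lam) ^ p ω) ∂μ ≤ 1

/-- `‖χ_A‖_{p(·)}`. -/
def chiNorm (μ : Measure Ω) (p : Ω → ℝ) (A : Set Ω) : ℝ :=
  vLpNorm μ p (A.indicator 1)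

/-- The variable Lorentz–Karamata quasi-norm `‖f‖_{p(·),q,b}` (with `q ∈ (0,∞]`). -/
def vLKNorm (μ : Measure Ω) (p : Ω → ℝ) (q : ℝ≥0∞) (b : ℝ → ℝ) (f : Ω → ℝ) : ℝ≥0∞ :=
  if q = ∞ then
    ⨆ t ∈ Set.Ioi (0:ℝ), ENNReal.ofReal
      (t * chiNorm μ p {ω | t < |f ω|} * gammaB b (chiNorm μ p {ω | t < |f ω|}))
  else
    (∫⁻ t in Set.Ioi (0:ℝ), ENNReal.ofReal
      ((t * chiNorm μ p {ω | t < |f ω|} * gammaB b (chiNorm μ p {ω | t < |f ω|})) ^ q.toReal / t))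
      ^ (1 / q.toReal)

namespace ChiAux

/-- the modular of an indicator -/
def mdl (μ : Measure Ω) (p : Ω → ℝ) (E : Set Ω) (lam : ℝ) : ℝ≥0∞ :=
  ∫⁻ ω in E, ENNReal.ofReal ((1 / lam) ^ p ω) ∂μ

lemma modular_eq (μ : Measure Ω) (p : Ω → ℝ) {pl : ℝ} (hpl : 0 < pl)
    (hp : ∀ᵐ ω ∂μ, pl ≤ p ω) {E : Set Ω} (hE : MeasurableSet E) (lam : ℝ) :
    ∫⁻ ω, ENNReal.ofReal ((|E.indicator (1 : Ω → ℝ) ω| / lam) ^ p ω) ∂μ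
      = mdl μ p E lam := by
  rw [mdl, ← lintegral_indicator hE]
  refine lintegral_congr_ae ?_
  filter_upwards [hp] with ω hω
  by_cases h : ω ∈ E
  · simp [Set.indicator_of_mem h]
  · have hpω : p ω ≠ 0 := (hpl.trans_le hω).ne'
    simp [Set.indicator_of_notMem h, Real.zero_rpow hpω]

/-- The admissible set for the indicator of `E`. -/
def T (μ : Measure Ω) (p : Ω → ℝ) (E : Set Ω) : Set ℝ :=
  {lam : ℝ | 0 < lam ∧ mdl μ p E lam ≤ 1}

lemma chiNorm_eq_sInf (μ : Measure Ω) (p : Ω → ℝ) {pl : ℝ} (hpl : 0 < pl)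
    (hp : ∀ᵐ ω ∂μ, pl ≤ p ω) {E : Set Ω} (hE : MeasurableSet E) :
    chiNorm μ p E = sInf (T μ p E) := by
  rw [chiNorm, vLpNorm]
  congr 1
  ext lam
  simp only [T, Set.mem_setOf_eq, modular_eq μ p hpl hp hE]

lemma mdl_one (μ : Measure Ω) (p : Ω → ℝ) (E : Set Ω) : mdl μ p E 1 = μ E := by
  simp [mdl]

lemma one_mem_T (μ : Measure Ω) [IsProbabilityMeasure μ] (p : Ω → ℝ) (E : Set Ω) :
    (1 : ℝ) ∈ T μ p E := by
  refine ⟨one_pos, ?_⟩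
  rw [mdl_one]
  exact prob_le_one

lemma bddBelow_T (μ : Measure Ω) (p : Ω → ℝ) (E : Set Ω) : BddBelow (T μ p E) :=
  ⟨0, fun x hx => hx.1.le⟩

lemma chiNorm_nonneg (μ : Measure Ω) [IsProbabilityMeasure μ] (p : Ω → ℝ) {pl : ℝ}
    (hpl : 0 < pl) (hp : ∀ᵐ ω ∂μ, pl ≤ p ω) {E : Set Ω} (hE : MeasurableSet E) :
    0 ≤ chiNorm μ p E := by
  rw [chiNorm_eq_sInf μ p hpl hp hE]
  exact le_csInf ⟨1, one_mem_T μ p E⟩ fun x hx => hx.1.le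

lemma chiNorm_le_one (μ : Measure Ω) [IsProbabilityMeasure μ] (p : Ω → ℝ) {pl : ℝ}
    (hpl : 0 < pl) (hp : ∀ᵐ ω ∂μ, pl ≤ p ω) {E : Set Ω} (hE : MeasurableSet E) :
    chiNorm μ p E ≤ 1 := by
  rw [chiNorm_eq_sInf μ p hpl hp hE]
  exact csInf_le (bddBelow_T μ p E) (one_mem_T μ p E)

/-- scaling estimate -/
lemma mdl_smul_le (μ : Measure Ω) (p : Ω → ℝ) {pl pu : ℝ} (hpl : 0 < pl)
    (hp : ∀ᵐ ω ∂μ, pl ≤ p ω ∧ p ω ≤ pu) (E : Set Ω) {lam t : ℝ}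
    (hlam : 0 < lam) (ht : 0 < t) (ht1 : t ≤ 1) :
    mdl μ p E (t * lam) ≤ ENNReal.ofReal (t ^ (-pu)) * mdl μ p E lam := by
  rw [mdl, mdl, ← lintegral_const_mul' _ _ ENNReal.ofReal_ne_top]
  refine lintegral_mono_ae ?_
  filter_upwards [ae_restrict_of_ae hp] with ω hω
  rw [← ENNReal.ofReal_mul (Real.rpow_nonneg ht.le _)]
  refine ENNReal.ofReal_le_ofReal ?_
  have h1 : (1 : ℝ) / (t * lam) = (1 / t) * (1 / lam) := by
    field_simp
  rw [h1, Real.mul_rpow (by positivity) (by positivity), one_div,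
    Real.inv_rpow ht.le, ← Real.rpow_neg ht.le]
  have h2 : t ^ (-p ω) ≤ t ^ (-pu) :=
    Real.rpow_le_rpow_of_exponent_ge ht ht1 (neg_le_neg hω.2)
  exact mul_le_mul_of_nonneg_right h2 (Real.rpow_nonneg (by positivity) _)

/-- per-set key bound -/
lemma chiNorm_pow_le (μ : Measure Ω) [IsProbabilityMeasure μ] (p : Ω → ℝ) {pl pu : ℝ}
    (hpl : 0 < pl) (hple : pl ≤ pu) (hp : ∀ᵐ ω ∂μ, pl ≤ p ω ∧ p ω ≤ pu)
    {E : Set Ω} (hE : MeasurableSet E) {lam : ℝ} (hlam : 0 < lam)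
    (h1 : mdl μ p E lam ≤ 1) :
    ENNReal.ofReal (chiNorm μ p E ^ pu) ≤ ENNReal.ofReal (lam ^ pu) * mdl μ p E lam := by
  have hpu : 0 < pu := hpl.trans_le hple
  have hp1 : ∀ᵐ ω ∂μ, pl ≤ p ω := hp.mono fun ω h => h.1
  have hchi : ∀ t : ℝ, 0 < t → t ≤ 1 → mdl μ p E (t * lam) ≤ 1 → chiNorm μ p E ≤ t * lam := by
    intro t ht ht1 hmem
    rw [chiNorm_eq_sInf μ p hpl hp1 hE]
    exact csInf_le (bddBelow_T μ p E) ⟨mul_pos ht hlam, hmem⟩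
  by_cases hm : mdl μ p E lam = 0
  · have hz : chiNorm μ p E = 0 := by
      refine le_antisymm ?_ (chiNorm_nonneg μ p hpl hp1 hE)
      refine le_of_forall_pos_le_add ?_
      intro δ hδ
      rw [zero_add]
      have ht : 0 < min 1 (δ / lam) := lt_min one_pos (by positivity)
      have := hchi _ ht (min_le_left _ _) (by
        refine le_trans (mdl_smul_le μ p hpl hp E hlam ht (min_le_left _ _)) ?_
        rw [hm, mul_zero]; exact zero_le)
      calc chiNorm μ p E ≤ min 1 (δ / lam) * lam := this
        _ ≤ (δ / lam) * lam := mul_le_mul_of_nonneg_right (min_le_right _ _) hlam.le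
        _ = δ := by field_simp
    rw [hz, Real.zero_rpow hpu.ne']
    simp
  · set m := mdl μ p E lam with hmdef
    have hmtop : m ≠ ∞ := (h1.trans_lt ENNReal.one_lt_top).ne
    set r := m.toReal with hrdef
    have hr : 0 < r := ENNReal.toReal_pos hm hmtop
    have hr1 : r ≤ 1 := by
      rw [hrdef, ← ENNReal.toReal_one]
      exact ENNReal.toReal_mono ENNReal.one_ne_top h1
    set t := r ^ (1 / pu) with htdef
    have ht : 0 < t := Real.rpow_pos_of_pos hr _
    have ht1 : t ≤ 1 := Real.rpow_le_one hr.le hr1 (by positivity)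
    have htpow : t ^ (-pu) = r⁻¹ := by
      rw [htdef, ← Real.rpow_mul hr.le]
      have : (1 / pu) * (-pu) = -1 := by field_simp
      rw [this, Real.rpow_neg_one]
    have hmem : mdl μ p E (t * lam) ≤ 1 := by
      refine (mdl_smul_le μ p hpl hp E hlam ht ht1).trans ?_
      rw [htpow, ENNReal.ofReal_inv_of_pos hr, hrdef, ENNReal.ofReal_toReal hmtop,
        ← hmdef, ENNReal.inv_mul_cancel hm hmtop]
    have hle := hchi t ht ht1 hmem
    have htpu : t ^ pu = r := by
      rw [htdef, ← Real.rpow_mul hr.le, one_div_mul_cancel hpu.ne', Real.rpow_one]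
    have h2 : chiNorm μ p E ^ pu ≤ lam ^ pu * r := by
      calc chiNorm μ p E ^ pu ≤ (t * lam) ^ pu :=
            Real.rpow_le_rpow (chiNorm_nonneg μ p hpl hp1 hE) hle hpu.le
        _ = t ^ pu * lam ^ pu := Real.mul_rpow ht.le hlam.le
        _ = lam ^ pu * r := by rw [htpu, mul_comm]
    calc ENNReal.ofReal (chiNorm μ p E ^ pu) ≤ ENNReal.ofReal (lam ^ pu * r) :=
          ENNReal.ofReal_le_ofReal h2
      _ = ENNReal.ofReal (lam ^ pu) * ENNReal.ofReal r := ENNReal.ofReal_mul (by positivity)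
      _ = ENNReal.ofReal (lam ^ pu) * m := by rw [hrdef, ENNReal.ofReal_toReal hmtop]

lemma tsum_chiNorm_pow_le (μ : Measure Ω) [IsProbabilityMeasure μ] (p : Ω → ℝ)
    {pl pu : ℝ} (hpl : 0 < pl) (hple : pl ≤ pu) (hp : ∀ᵐ ω ∂μ, pl ≤ p ω ∧ p ω ≤ pu)
    (A : ℕ → Set Ω) (hA : ∀ i, MeasurableSet (A i))
    (hd : Pairwise (Function.onFun Disjoint A)) :
    ∑' i, ENNReal.ofReal (chiNorm μ p (A i) ^ pu)
      ≤ ENNReal.ofReal (chiNorm μ p (⋃ i, A i) ^ pu) := by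
  have hpu : 0 < pu := hpl.trans_le hple
  have hp1 : ∀ᵐ ω ∂μ, pl ≤ p ω := hp.mono fun ω h => h.1
  have hU : MeasurableSet (⋃ i, A i) := MeasurableSet.iUnion hA
  have step : ∀ lam ∈ T μ p (⋃ i, A i),
      ∑' i, ENNReal.ofReal (chiNorm μ p (A i) ^ pu) ≤ ENNReal.ofReal (lam ^ pu) := by
    intro lam hlam
    have hsplit : mdl μ p (⋃ i, A i) lam = ∑' i, mdl μ p (A i) lam :=
      lintegral_iUnion hA hd _
    have hi : ∀ i, mdl μ p (A i) lam ≤ 1 := fun i =>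
      le_trans (le_trans (ENNReal.le_tsum i) hsplit.symm.le) hlam.2
    calc ∑' i, ENNReal.ofReal (chiNorm μ p (A i) ^ pu)
        ≤ ∑' i, ENNReal.ofReal (lam ^ pu) * mdl μ p (A i) lam :=
          ENNReal.tsum_le_tsum fun i => chiNorm_pow_le μ p hpl hple hp (hA i) hlam.1 (hi i)
      _ = ENNReal.ofReal (lam ^ pu) * ∑' i, mdl μ p (A i) lam := ENNReal.tsum_mul_left
      _ ≤ ENNReal.ofReal (lam ^ pu) * 1 := mul_le_mul_right (hsplit ▸ hlam.2) _
      _ = _ := mul_one _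
  set S := chiNorm μ p (⋃ i, A i) with hS
  have hTne : (T μ p (⋃ i, A i)).Nonempty := ⟨1, one_mem_T μ p _⟩
  have hδs : ∀ δ : ℝ, δ ∈ Set.Ioi (0:ℝ) →
      ∑' i, ENNReal.ofReal (chiNorm μ p (A i) ^ pu) ≤ ENNReal.ofReal ((S + δ) ^ pu) := by
    intro δ hδ
    obtain ⟨lam, hlamT, hlamlt⟩ := Real.lt_sInf_add_pos hTne hδ
    refine (step lam hlamT).trans (ENNReal.ofReal_le_ofReal ?_)
    refine Real.rpow_le_rpow hlamT.1.le ?_ hpu.le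
    rw [hS, chiNorm_eq_sInf μ p hpl hp1 hU]
    exact hlamlt.le
  have h1 : Tendsto (fun δ : ℝ => S + δ) (𝓝[>] 0) (𝓝 S) := by
    have : Tendsto (fun δ : ℝ => S + δ) (𝓝 0) (𝓝 (S + 0)) :=
      ((continuous_const.add continuous_id).tendsto (0:ℝ))
    simpa using this.mono_left nhdsWithin_le_nhds
  have h2 : Tendsto (fun δ : ℝ => (S + δ) ^ pu) (𝓝[>] 0) (𝓝 (S ^ pu)) :=
    ((Real.continuousAt_rpow_const S pu (Or.inr hpu.le)).tendsto).comp h1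
  have htend : Tendsto (fun δ : ℝ => ENNReal.ofReal ((S + δ) ^ pu)) (𝓝[>] 0)
      (𝓝 (ENNReal.ofReal (S ^ pu))) :=
    (ENNReal.continuous_ofReal.tendsto _).comp h2
  exact ge_of_tendsto htend (eventually_nhdsWithin_of_forall hδs)

lemma sv_bound {b : ℝ → ℝ} (hb : SlowlyVarying b) {ε : ℝ} (hε : 0 < ε) :
    ∃ K > (0:ℝ), ∀ x y : ℝ, 1 ≤ x → x ≤ y → b y ≤ K * (y ^ ε * x ^ (-ε)) * b x := by
  obtain ⟨hpos, hsv⟩ := hb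
  obtain ⟨-, g, hg, c, hc, Cb, hCb, hgb⟩ := hsv ε hε
  refine ⟨Cb / c, by positivity, fun x y hx hxy => ?_⟩
  have hy : (1:ℝ) ≤ y := hx.trans hxy
  have hy0 : (0:ℝ) < y := lt_of_lt_of_le one_pos hy
  have h1 : y ^ (-ε) * b y ≤ Cb * g y := (hgb y hy).2
  have h2 : g y ≤ g x := hg hx hy hxy
  have h3 : c * g x ≤ x ^ (-ε) * b x := (hgb x hx).1
  have key : y ^ (-ε) * b y ≤ Cb * ((x ^ (-ε) * b x) / c) := by
    refine h1.trans ?_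
    refine mul_le_mul_of_nonneg_left (h2.trans ?_) hCb.le
    rw [le_div_iff₀ hc]
    linarith
  have hsplit : b y = y ^ ε * (y ^ (-ε) * b y) := by
    rw [← mul_assoc, ← Real.rpow_add hy0]
    simp
  calc b y = y ^ ε * (y ^ (-ε) * b y) := hsplit
    _ ≤ y ^ ε * (Cb * ((x ^ (-ε) * b x) / c)) :=
        mul_le_mul_of_nonneg_left key (Real.rpow_nonneg hy0.le _)
    _ = Cb / c * (y ^ ε * x ^ (-ε)) * b x := by ring

lemma tsum_indicator_eq (A : ℕ → Set Ω) (hd : Pairwise (Function.onFun Disjoint A)) :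
    (fun ω => ∑' i, (A i).indicator (1 : Ω → ℝ) ω) = (⋃ i, A i).indicator 1 := by
  funext ω
  by_cases h : ω ∈ ⋃ i, A i
  · obtain ⟨j, hj⟩ := Set.mem_iUnion.mp h
    rw [Set.indicator_of_mem h]
    rw [tsum_eq_single j]
    · simp [Set.indicator_of_mem hj]
    · intro i hij
      have hni : ω ∉ A i := fun hi => Set.disjoint_left.mp (hd hij) hi hj
      simp [Set.indicator_of_notMem hni]
  · have hni : ∀ i, ω ∉ A i := fun i hi => h (Set.mem_iUnion.mpr ⟨i, hi⟩)
    simp [Set.indicator_of_notMem, hni, Set.indicator_of_notMem h]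

lemma chiNorm_mono (μ : Measure Ω) [IsProbabilityMeasure μ] (p : Ω → ℝ) {pl : ℝ}
    (hpl : 0 < pl) (hp : ∀ᵐ ω ∂μ, pl ≤ p ω) {E E' : Set Ω} (hsub : E' ⊆ E)
    (hE : MeasurableSet E) (hE' : MeasurableSet E') :
    chiNorm μ p E' ≤ chiNorm μ p E := by
  rw [chiNorm_eq_sInf μ p hpl hp hE, chiNorm_eq_sInf μ p hpl hp hE']
  refine csInf_le_csInf (bddBelow_T μ p E') ⟨1, one_mem_T μ p E⟩ ?_
  intro lam hlam
  exact ⟨hlam.1, le_trans (lintegral_mono' (Measure.restrict_mono hsub le_rfl) le_rfl) hlam.2⟩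

end ChiAux

/-- For `p₊ < θ < ∞` and pairwise disjoint measurable sets `(A_i)`,
`∑_i ‖χ_{A_i}‖^θ γ_b^θ(‖χ_{A_i}‖) ≲ ‖∑_i χ_{A_i}‖^θ γ_b^θ(‖∑_i χ_{A_i}‖)`. -/
theorem chiNorm_tsum_lower (μ : Measure Ω) [IsProbabilityMeasure μ]
    (p : Ω → ℝ) (pl pu : ℝ) (hpl : 0 < pl) (hple : pl ≤ pu)
    (hp : ∀ᵐ ω ∂μ, pl ≤ p ω ∧ p ω ≤ pu)
    (b : ℝ → ℝ) (hb : SlowlyVarying b)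
    (θ : ℝ) (hθp : pu < θ) :
    ∃ C > (0:ℝ), ∀ A : ℕ → Set Ω, (∀ i, MeasurableSet (A i)) →
      Pairwise (Function.onFun Disjoint A) →
      ∑' i, ENNReal.ofReal
          (chiNorm μ p (A i) ^ θ * gammaB b (chiNorm μ p (A i)) ^ θ) ≤
        ENNReal.ofReal C *
          ENNReal.ofReal
            (vLpNorm μ p (fun ω => ∑' i, (A i).indicator (1 : Ω → ℝ) ω) ^ θ *
              gammaB b (vLpNorm μ p (fun ω => ∑' i, (A i).indicator (1 : Ω → ℝ) ω)) ^ θ) := by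
  have hbpos := hb.1
  have hpu : 0 < pu := hpl.trans_le hple
  have hθ : 0 < θ := hpu.trans hθp
  have hp1 : ∀ᵐ ω ∂μ, pl ≤ p ω := hp.mono fun ω h => h.1
  set ε := (θ - pu) / θ with hεdef
  have hε : 0 < ε := div_pos (by linarith) hθ
  have hεθ : ε * θ = θ - pu := by rw [hεdef]; field_simp
  obtain ⟨K, hK, hKb⟩ := ChiAux.sv_bound hb hε
  refine ⟨K ^ θ, Real.rpow_pos_of_pos hK θ, fun A hA hd => ?_⟩
  rw [ChiAux.tsum_indicator_eq A hd]
  have hU : MeasurableSet (⋃ i, A i) := MeasurableSet.iUnion hA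
  have hveq : vLpNorm μ p ((⋃ i, A i).indicator 1) = chiNorm μ p (⋃ i, A i) := rfl
  rw [hveq]
  set s := chiNorm μ p (⋃ i, A i) with hs
  have hs0 : 0 ≤ s := ChiAux.chiNorm_nonneg μ p hpl hp1 hU
  have hs1 : s ≤ 1 := ChiAux.chiNorm_le_one μ p hpl hp1 hU
  have hmono : ∀ i, chiNorm μ p (A i) ≤ s := fun i =>
    ChiAux.chiNorm_mono μ p hpl hp1 (Set.subset_iUnion A i) hU (hA i)
  by_cases hsz : s = 0
  · have hzero : ∀ i, chiNorm μ p (A i) = 0 := fun i =>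
      le_antisymm (hsz ▸ hmono i) (ChiAux.chiNorm_nonneg μ p hpl hp1 (hA i))
    simp [hzero, Real.zero_rpow hθ.ne']
  · have hspos : 0 < s := lt_of_le_of_ne hs0 (Ne.symm hsz)
    have h1s : (1:ℝ) ≤ s⁻¹ := one_le_inv_iff₀.mpr ⟨hspos, hs1⟩
    have hbs : 0 < b s⁻¹ := hbpos _ h1s
    have hmax : max s s⁻¹ = s⁻¹ := max_eq_right (hs1.trans h1s)
    set B := K ^ θ * (s ^ (θ - pu) * b s⁻¹ ^ θ) with hB
    have hB0 : 0 ≤ B := by positivity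
    have hterm : ∀ i, ENNReal.ofReal
        (chiNorm μ p (A i) ^ θ * gammaB b (chiNorm μ p (A i)) ^ θ)
        ≤ ENNReal.ofReal B * ENNReal.ofReal (chiNorm μ p (A i) ^ pu) := by
      intro i
      set ci := chiNorm μ p (A i) with hci
      by_cases hciz : ci = 0
      · simp [hciz, Real.zero_rpow hθ.ne']
      · have hcipos : 0 < ci :=
          lt_of_le_of_ne (ChiAux.chiNorm_nonneg μ p hpl hp1 (hA i)) (Ne.symm hciz)
        have hci1 : ci ≤ 1 := (hmono i).trans hs1
        have h1ci : (1:ℝ) ≤ ci⁻¹ := one_le_inv_iff₀.mpr ⟨hcipos, hci1⟩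
        have hsc : s⁻¹ ≤ ci⁻¹ := inv_anti₀ hcipos (hmono i)
        have hmaxci : max ci ci⁻¹ = ci⁻¹ := max_eq_right (hci1.trans h1ci)
        have e1 : (ci⁻¹) ^ ε = ci ^ (-ε) := by
          rw [Real.inv_rpow hcipos.le, ← Real.rpow_neg hcipos.le]
        have e2 : (s⁻¹) ^ (-ε) = s ^ ε := by
          rw [Real.inv_rpow hspos.le, Real.rpow_neg hspos.le, inv_inv]
        have hb1 : b ci⁻¹ ≤ K * (ci ^ (-ε) * s ^ ε) * b s⁻¹ := by
          have := hKb s⁻¹ ci⁻¹ h1s hsc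
          rwa [e1, e2] at this
        have hb2 : b ci⁻¹ ^ θ ≤ (K * (ci ^ (-ε) * s ^ ε) * b s⁻¹) ^ θ :=
          Real.rpow_le_rpow (hbpos _ h1ci).le hb1 hθ.le
        have hexp : (K * (ci ^ (-ε) * s ^ ε) * b s⁻¹) ^ θ
            = K ^ θ * (ci ^ (-ε * θ) * s ^ (ε * θ)) * b s⁻¹ ^ θ := by
          rw [Real.mul_rpow (by positivity) hbs.le,
            Real.mul_rpow hK.le (by positivity),
            Real.mul_rpow (by positivity) (by positivity),
            ← Real.rpow_mul hcipos.le, ← Real.rpow_mul hspos.le]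
        have hpow : ci ^ θ * ci ^ (-ε * θ) = ci ^ pu := by
          rw [← Real.rpow_add hcipos]
          congr 1
          have : -ε * θ = -(ε * θ) := by ring
          rw [this, hεθ]; ring
        have key : ci ^ θ * b ci⁻¹ ^ θ ≤ B * ci ^ pu := by
          calc ci ^ θ * b ci⁻¹ ^ θ
              ≤ ci ^ θ * (K * (ci ^ (-ε) * s ^ ε) * b s⁻¹) ^ θ :=
                mul_le_mul_of_nonneg_left hb2 (by positivity)
            _ = K ^ θ * (s ^ (ε * θ) * b s⁻¹ ^ θ) * (ci ^ θ * ci ^ (-ε * θ)) := by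
                rw [hexp]; ring
            _ = B * ci ^ pu := by rw [hpow, hεθ]
        rw [gammaB, hmaxci, ← ENNReal.ofReal_mul hB0]
        exact ENNReal.ofReal_le_ofReal key
    calc ∑' i, ENNReal.ofReal
          (chiNorm μ p (A i) ^ θ * gammaB b (chiNorm μ p (A i)) ^ θ)
        ≤ ∑' i, ENNReal.ofReal B * ENNReal.ofReal (chiNorm μ p (A i) ^ pu) :=
          ENNReal.tsum_le_tsum hterm
      _ = ENNReal.ofReal B * ∑' i, ENNReal.ofReal (chiNorm μ p (A i) ^ pu) :=
          ENNReal.tsum_mul_left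
      _ ≤ ENNReal.ofReal B * ENNReal.ofReal (s ^ pu) :=
          mul_le_mul_right (ChiAux.tsum_chiNorm_pow_le μ p hpl hple hp A hA hd) _
      _ = ENNReal.ofReal (K ^ θ) * ENNReal.ofReal (s ^ θ * gammaB b s ^ θ) := by
          rw [← ENNReal.ofReal_mul hB0, ← ENNReal.ofReal_mul (by positivity), hB,
            gammaB, hmax]
          congr 1
          have h3 : s ^ (θ - pu) * s ^ pu = s ^ θ := by
            rw [← Real.rpow_add hspos]
            ring_nf
          calc K ^ θ * (s ^ (θ - pu) * b s⁻¹ ^ θ) * s ^ pu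
              = K ^ θ * (s ^ (θ - pu) * s ^ pu * b s⁻¹ ^ θ) := by ring
            _ = K ^ θ * (s ^ θ * b s⁻¹ ^ θ) := by rw [h3]
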